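/- Let b : X → ℝ, let χ₀, χ₁, …, χₘ₊₁ be differentiable at every point of s, each satisfying (L·)(x) + q(x)·(·)(x) = b(x) for all x ∈ s, with χ₁(x) ≠ χ₀(x) for all x ∈ s, and let f : ℝᵐ → ℝ be differentiable. Then the function χ(x) = χ₀(x) + (χ₁(x) − χ₀(x)) · f( (χ₂(x) − χ₀(x))/(χ₁(x) − χ₀(x)), …, (χₘ₊₁(x) − χ₀(x))/(χ₁(x) − χ₀(x)) ) satisfies (Lχ)(x) + q(x)·χ(x) = b(x) for all x ∈ s; that is, a solution of the totally linear equation can be built from m+2 particular solutions. -/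

import Mathlib

open ContinuousLinearMap

lemma fderiv_div_apply' {X : Type*} [NormedAddCommGroup X] [NormedSpace ℝ X]
    {c d : X → ℝ} {x v : X} (hc : DifferentiableAt ℝ c x) (hd : DifferentiableAt ℝ d x)
    (h : d x ≠ 0) :
    fderiv ℝ (fun y => c y / d y) x v
      = (fderiv ℝ c x v * d x - c x * fderiv ℝ d x v) / d x ^ 2 := by
  have hinv : HasFDerivAt (fun y => (d y)⁻¹)
      ((-mulLeftRight ℝ ℝ (d x)⁻¹ (d x)⁻¹).comp (fderiv ℝ d x)) x :=
    (hasFDerivAt_inv' h).comp x hd.hasFDerivAt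
  have hmul := hc.hasFDerivAt.mul hinv
  have := hmul.fderiv
  have heq : (fun y => c y * (d y)⁻¹) = fun y => c y / d y := by
    funext y; rw [div_eq_mul_inv]
  rw [show (c * fun y => (d y)⁻¹) = fun y => c y / d y from heq] at this
  rw [this]
  simp [mulLeftRight_apply]
  field_simp
  ring

/-- A solution of the totally linear equation built from m+2 particular solutions:
χ = χ₀ + (χ₁ − χ₀)·f((χ₂ − χ₀)/(χ₁ − χ₀), …, (χₘ₊₁ − χ₀)/(χ₁ − χ₀))
solves (L+q)χ = b on s. -/
theorem solution_from_particular_solutions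
    {X : Type*} [NormedAddCommGroup X] [NormedSpace ℝ X]
    (s : Set X) (hs : IsOpen s) (a : X → X) (q b : X → ℝ)
    (m : ℕ) (χ : Fin (m + 2) → X → ℝ)
    (hχd : ∀ j, ∀ x ∈ s, DifferentiableAt ℝ (χ j) x)
    (hχeq : ∀ j, ∀ x ∈ s, fderiv ℝ (χ j) x (a x) + q x * χ j x = b x)
    (hne : ∀ x ∈ s, χ 1 x ≠ χ 0 x)
    (f : (Fin m → ℝ) → ℝ) (hf : Differentiable ℝ f) :
    ∀ x ∈ s,
      fderiv ℝ
          (fun y => χ 0 y + (χ 1 y - χ 0 y) *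
            f (fun j => (χ j.succ.succ y - χ 0 y) / (χ 1 y - χ 0 y))) x (a x)
        + q x * (χ 0 x + (χ 1 x - χ 0 x) *
            f (fun j => (χ j.succ.succ x - χ 0 x) / (χ 1 x - χ 0 x))) = b x := by
  intro x hx
  have h01 : χ 1 x - χ 0 x ≠ 0 := sub_ne_zero.mpr (hne x hx)
  have hd : ∀ j : Fin (m + 2), DifferentiableAt ℝ (χ j) x := fun j => hχd j x hx
  have hder : ∀ j : Fin (m + 2), fderiv ℝ (χ j) x (a x) = b x - q x * χ j x := by
    intro j; have := hχeq j x hx; linarith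
  -- the denominator u
  have hu : DifferentiableAt ℝ (fun y => χ 1 y - χ 0 y) x := (hd 1).sub (hd 0)
  have hu' : fderiv ℝ (fun y => χ 1 y - χ 0 y) x (a x)
      = -(q x) * (χ 1 x - χ 0 x) := by
    rw [fderiv_fun_sub (hd 1) (hd 0)]
    simp [hder 1, hder 0]; ring
  -- the ratio map r
  set r : X → Fin m → ℝ :=
    fun y j => (χ j.succ.succ y - χ 0 y) / (χ 1 y - χ 0 y) with hrdef
  have hnum : ∀ j : Fin m, DifferentiableAt ℝ (fun y => χ j.succ.succ y - χ 0 y) x :=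
    fun j => (hd j.succ.succ).sub (hd 0)
  have hnum' : ∀ j : Fin m, fderiv ℝ (fun y => χ j.succ.succ y - χ 0 y) x (a x)
      = -(q x) * (χ j.succ.succ x - χ 0 x) := by
    intro j
    rw [fderiv_fun_sub (hd j.succ.succ) (hd 0)]
    simp [hder j.succ.succ, hder 0]; ring
  have hrj : ∀ j : Fin m, DifferentiableAt ℝ (fun y => r y j) x := by
    intro j
    have : (fun y => r y j)
        = fun y => (χ j.succ.succ y - χ 0 y) * (χ 1 y - χ 0 y)⁻¹ := by
      funext y; simp [hrdef, div_eq_mul_inv]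
    rw [this]
    exact (hnum j).mul (hu.inv h01)
  have hrd : DifferentiableAt ℝ r x := differentiableAt_pi.mpr hrj
  have hr0 : fderiv ℝ r x (a x) = 0 := by
    funext j
    have hpi : fderiv ℝ r x = ContinuousLinearMap.pi fun j => fderiv ℝ (fun y => r y j) x :=
      fderiv_pi hrj
    rw [hpi]
    simp only [ContinuousLinearMap.pi_apply, Pi.zero_apply]
    rw [show (fun y => r y j) = fun y => (χ j.succ.succ y - χ 0 y) / (χ 1 y - χ 0 y) from rfl]
    rw [fderiv_div_apply' (hnum j) hu h01, hnum' j, hu']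
    field_simp
    ring
  -- derivative of f ∘ r along a x is zero
  have hfr : DifferentiableAt ℝ (fun y => f (r y)) x := (hf (r x)).comp x hrd
  have hfr0 : fderiv ℝ (fun y => f (r y)) x (a x) = 0 := by
    have hc := fderiv_comp x (hf (r x)) hrd
    have : fderiv ℝ (fun y => f (r y)) x = fderiv ℝ (f ∘ r) x := rfl
    rw [this, hc]
    simp [hr0]
  -- assemble
  have hmuld : DifferentiableAt ℝ (fun y => (χ 1 y - χ 0 y) * f (r y)) x := hu.mul hfr
  have key : fderiv ℝ
      (fun y => χ 0 y + (χ 1 y - χ 0 y) * f (r y)) x (a x)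
      = fderiv ℝ (χ 0) x (a x)
        + (fderiv ℝ (fun y => χ 1 y - χ 0 y) x (a x) * f (r x)
           + (χ 1 x - χ 0 x) * fderiv ℝ (fun y => f (r y)) x (a x)) := by
    rw [fderiv_fun_add (hd 0) hmuld]
    simp only [ContinuousLinearMap.add_apply]
    congr 1
    rw [fderiv_fun_mul hu hfr]
    simp only [ContinuousLinearMap.add_apply, ContinuousLinearMap.smul_apply, smul_eq_mul]
    ring
  have hgoal : (fun y => χ 0 y + (χ 1 y - χ 0 y) *
      f (fun j => (χ j.succ.succ y - χ 0 y) / (χ 1 y - χ 0 y)))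
      = fun y => χ 0 y + (χ 1 y - χ 0 y) * f (r y) := rfl
  rw [hgoal, key, hder 0, hu', hfr0]
  have : f (fun j => (χ j.succ.succ x - χ 0 x) / (χ 1 x - χ 0 x)) = f (r x) := rfl
  rw [this]
  ring
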